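/- Let h : [0,1] → [0,1] be a Lebesgue-measure-preserving bijection with measurable measure-preserving inverse. Define Ω√2 = {(x,y) ∈ (0,1)² : h(x) ≤ y and h⁻¹(y) ≤ x} and Ω₀ = {(x,y) ∈ (0,1)² : h(x) > y and h⁻¹(y) > x}. Then λ₂(Ω₀) = λ₂(Ω√2). -/

import Mathlib

open MeasureTheory Set

lemma unitInterval_singleton_null (c : unitInterval) : volume ({c} : Set unitInterval) = 0 := by
  rw [Measure.Subtype.volume_def, Measure.comap_apply _ Subtype.val_injective
    (fun s hs => MeasurableSet.subtype_image measurableSet_Icc hs) _ (measurableSet_singleton c)]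
  simp

lemma graph_null (h : unitInterval → unitInterval) (hm : Measurable h) :
    volume {p : unitInterval × unitInterval | p.2 = h p.1} = 0 := by
  have hs : MeasurableSet {p : unitInterval × unitInterval | p.2 = h p.1} :=
    (measurable_snd.stronglyMeasurable).measurableSet_eq_fun
      ((hm.comp measurable_fst).stronglyMeasurable)
  rw [Measure.volume_eq_prod, Measure.prod_apply hs]
  have : ∀ x : unitInterval,
      volume (Prod.mk x ⁻¹' {p : unitInterval × unitInterval | p.2 = h p.1}) = 0 := by
    intro x
    have : (Prod.mk x ⁻¹' {p : unitInterval × unitInterval | p.2 = h p.1}) = {h x} := by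
      ext y; simp [Set.mem_preimage]
    rw [this]
    exact unitInterval_singleton_null _
  simp only [this]
  simp [unitInterval_singleton_null]

lemma graph_null' (g : unitInterval → unitInterval) (hm : Measurable g) :
    volume {p : unitInterval × unitInterval | p.1 = g p.2} = 0 := by
  have hsw : MeasurePreserving (Prod.swap : unitInterval × unitInterval → _) volume volume := by
    rw [Measure.volume_eq_prod]
    exact Measure.measurePreserving_swap
  have hs : MeasurableSet {p : unitInterval × unitInterval | p.2 = g p.1} :=
    (measurable_snd.stronglyMeasurable).measurableSet_eq_fun
      ((hm.comp measurable_fst).stronglyMeasurable)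
  have : {p : unitInterval × unitInterval | p.1 = g p.2} =
      Prod.swap ⁻¹' {p : unitInterval × unitInterval | p.2 = g p.1} := by
    ext p; simp
  rw [this, hsw.measure_preimage hs.nullMeasurableSet]
  exact graph_null g hm

lemma vert_null (c : unitInterval) :
    volume {p : unitInterval × unitInterval | p.1 = c} = 0 := by
  have : {p : unitInterval × unitInterval | p.1 = c} = ({c} : Set unitInterval) ×ˢ univ := by
    ext ⟨x, y⟩; simp [eq_comm]
  rw [this, Measure.volume_eq_prod, Measure.prod_prod, unitInterval_singleton_null]
  simp

lemma horiz_null (c : unitInterval) :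
    volume {p : unitInterval × unitInterval | p.2 = c} = 0 := by
  have : {p : unitInterval × unitInterval | p.2 = c} = univ ×ˢ ({c} : Set unitInterval) := by
    ext ⟨x, y⟩; simp [eq_comm]
  rw [this, Measure.volume_eq_prod, Measure.prod_prod, unitInterval_singleton_null]
  simp

/-- For a measure-preserving bijection `h` of `[0,1]` with measurable measure-preserving
inverse `g`, the sets `Ω√2 = {(x,y) ∈ (0,1)² : h x ≤ y, h⁻¹ y ≤ x}` and
`Ω₀ = {(x,y) ∈ (0,1)² : h x > y, h⁻¹ y > x}` have the same two-dimensional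
Lebesgue measure. -/
theorem stmt_4 (h g : unitInterval → unitInterval)
    (hbij : Function.Bijective h)
    (hmp : MeasurePreserving h volume volume)
    (hgl : Function.LeftInverse g h) (hgr : Function.RightInverse g h)
    (hgmeas : Measurable g) (hgmp : MeasurePreserving g volume volume) :
    volume {p : unitInterval × unitInterval |
        (0 < p.1 ∧ p.1 < 1 ∧ 0 < p.2 ∧ p.2 < 1) ∧ p.2 < h p.1 ∧ p.1 < g p.2} =
    volume {p : unitInterval × unitInterval |
        (0 < p.1 ∧ p.1 < 1 ∧ 0 < p.2 ∧ p.2 < 1) ∧ h p.1 ≤ p.2 ∧ g p.2 ≤ p.1} := by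
  have hm := hmp.measurable
  set A : Set (unitInterval × unitInterval) := {p |
      (0 < p.1 ∧ p.1 < 1 ∧ 0 < p.2 ∧ p.2 < 1) ∧ p.2 < h p.1 ∧ p.1 < g p.2} with hA
  set B : Set (unitInterval × unitInterval) := {p |
      (0 < p.1 ∧ p.1 < 1 ∧ 0 < p.2 ∧ p.2 < 1) ∧ h p.1 ≤ p.2 ∧ g p.2 ≤ p.1} with hBdef
  have hsw : MeasurePreserving (Prod.swap : unitInterval × unitInterval → _) volume volume := by
    rw [Measure.volume_eq_prod]
    exact Measure.measurePreserving_swap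
  have hprod : MeasurePreserving (Prod.map g h)
      (volume : Measure (unitInterval × unitInterval)) volume := by
    rw [Measure.volume_eq_prod]
    exact hgmp.prod hmp
  have hΨ : MeasurePreserving (fun p : unitInterval × unitInterval => (g p.2, h p.1))
      volume volume := hprod.comp hsw
  have hB : MeasurableSet B := by
    simp only [hBdef, Set.setOf_and]
    exact (((measurableSet_lt measurable_const measurable_fst).inter
        ((measurableSet_lt measurable_fst measurable_const).inter
        ((measurableSet_lt measurable_const measurable_snd).inter
        (measurableSet_lt measurable_snd measurable_const)))).inter
      ((measurableSet_le (hm.comp measurable_fst) measurable_snd).inter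
        (measurableSet_le (hgmeas.comp measurable_snd) measurable_fst)))
  have key : A =ᵐ[volume] (fun p : unitInterval × unitInterval => (g p.2, h p.1)) ⁻¹' B := by
    rw [MeasureTheory.ae_eq_set]
    constructor
    · apply measure_mono_null (t := {p : unitInterval × unitInterval | p.1 = g 1} ∪
        {p : unitInterval × unitInterval | p.2 = h 1})
      · rintro ⟨x, y⟩ ⟨hA, hnB⟩
        simp only [hBdef, Set.mem_preimage, Set.mem_setOf_eq] at hA hnB
        obtain ⟨⟨hx0, hx1, hy0, hy1⟩, hyh, hxg⟩ := hA
        by_contra hcon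
        simp only [Set.mem_union, Set.mem_setOf_eq] at hcon
        push_neg at hcon
        apply hnB
        refine ⟨⟨lt_of_le_of_lt hx0.le (lt_of_le_of_lt (le_refl x) hxg), ?_,
          lt_of_le_of_lt hy0.le (lt_of_le_of_lt (le_refl y) hyh), ?_⟩, ?_, ?_⟩
        · exact lt_of_le_of_ne unitInterval.le_one' (fun heq => hcon.2 (by
            rw [← hgr y, heq]))
        · exact lt_of_le_of_ne unitInterval.le_one' (fun heq => hcon.1 (by
            rw [← hgl x, heq]))
        · rw [hgr y]; exact hyh.le
        · rw [hgl x]; exact hxg.le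
      · exact measure_union_null (vert_null (g 1)) (horiz_null (h 1))
    · apply measure_mono_null (t :=
        ({p : unitInterval × unitInterval | p.1 = (0 : unitInterval)} ∪
         {p : unitInterval × unitInterval | p.2 = (0 : unitInterval)}) ∪
        ({p : unitInterval × unitInterval | p.2 = h p.1} ∪
         {p : unitInterval × unitInterval | p.1 = g p.2}))
      · rintro ⟨x, y⟩ ⟨hBm, hnA⟩
        simp only [hBdef, Set.mem_preimage, Set.mem_setOf_eq] at hBm hnA
        obtain ⟨⟨hg0, hg1, hh0, hh1⟩, hyh, hxg⟩ := hBm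
        rw [hgr y] at hyh
        rw [hgl x] at hxg
        simp only [Set.mem_union, Set.mem_setOf_eq]
        by_contra hcon
        push_neg at hcon
        obtain ⟨⟨hx0, hy0⟩, hyh', hxg'⟩ := hcon
        apply hnA
        refine ⟨⟨lt_of_le_of_ne unitInterval.nonneg' (Ne.symm hx0),
          lt_of_le_of_lt hxg (lt_of_le_of_ne unitInterval.le_one' ?_),
          lt_of_le_of_ne unitInterval.nonneg' (Ne.symm hy0),
          lt_of_le_of_lt hyh (lt_of_le_of_ne unitInterval.le_one' ?_)⟩,
          lt_of_le_of_ne hyh hyh', lt_of_le_of_ne hxg hxg'⟩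
        · exact fun heq => (ne_of_lt hg1) heq
        · exact fun heq => (ne_of_lt hh1) heq
      · exact measure_union_null
          (measure_union_null (vert_null 0) (horiz_null 0))
          (measure_union_null (graph_null h hm) (graph_null' g hgmeas))
  rw [measure_congr key, hΨ.measure_preimage hB.nullMeasurableSet]
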